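/- Let A be a finite-dimensional algebra with a generalized H-action over an algebraically closed field F, with weak Wedderburn–Malcev data (B, κ) as in the main lemma: A/J^H(A) = B₁ ⊕ ⋯ ⊕ B_q a direct sum of H-invariant ideals with each Bᵢ unital, B the maximal semisimple subalgebra of A/J^H(A) with A/J^H(A) = B ⊕ J(A/J^H(A)). Then 1_B = 1_{A/J^H(A)}, the algebras B̃ᵢ := 1_{Bᵢ}B satisfy B = B̃₁ ⊕ ⋯ ⊕ B̃_q (direct sum of ideals), each B̃ᵢ is a maximal semisimple subalgebra of Bᵢ, and 1_{B̃ᵢ} = 1_{Bᵢ} ∈ B. -/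

import Mathlib

/-- The product of two subspaces of a (not necessarily unital) algebra. -/
def Submodule.mulSub (F : Type*) [Field F] {Q : Type*} [NonUnitalRing Q] [Module F Q]
    (I J : Submodule F Q) : Submodule F Q :=
  Submodule.span F {z | ∃ x ∈ I, ∃ y ∈ J, z = x * y}

/-- `Submodule.powSub F I n = I^(n+1)`. -/
def Submodule.powSub (F : Type*) [Field F] {Q : Type*} [NonUnitalRing Q] [Module F Q]
    (I : Submodule F Q) : ℕ → Submodule F Q
  | 0 => I
  | n + 1 => Submodule.mulSub F (Submodule.powSub F I n) I

/-- A generalized `H`-action on an algebra. -/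
def IsGenAction {F : Type*} [Field F] {Q : Type*} [NonUnitalRing Q] [Module F Q]
    {H : Type*} [Ring H] [Algebra F H] (ρ : H →ₐ[F] Module.End F Q) : Prop :=
  ∀ h : H, ∃ (k : ℕ) (h₁ h₂ h₃ h₄ : Fin k → H), ∀ a b : Q,
    ρ h (a * b) = ∑ i : Fin k, (ρ (h₁ i) a * ρ (h₂ i) b + ρ (h₃ i) b * ρ (h₄ i) a)

/-- A multiplicatively closed subspace `C` is semisimple iff it has no nonzero nilpotent
two-sided ideal. -/
def IsSemisimplePiece (F : Type*) [Field F] {Q : Type*} [NonUnitalRing Q] [Module F Q]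
    (C : Submodule F Q) : Prop :=
  ∀ W : Submodule F Q, W ≤ C →
    (∀ c ∈ C, ∀ w ∈ W, c * w ∈ W ∧ w * c ∈ W) →
    (∃ n : ℕ, Submodule.powSub F W n = ⊥) → W = ⊥

namespace AuxMSD

variable {F : Type*} [Field F] {Q : Type*} [NonUnitalRing Q] [Module F Q]

theorem mem_mulSub {I J : Submodule F Q} {x y : Q} (hx : x ∈ I) (hy : y ∈ J) :
    x * y ∈ Submodule.mulSub F I J :=
  Submodule.subset_span ⟨x, hx, y, hy, rfl⟩

theorem mulSub_mono {I I' J J' : Submodule F Q} (h1 : I ≤ I') (h2 : J ≤ J') :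
    Submodule.mulSub F I J ≤ Submodule.mulSub F I' J' :=
  Submodule.span_mono (by rintro z ⟨x, hx, y, hy, rfl⟩; exact ⟨x, h1 hx, y, h2 hy, rfl⟩)

theorem powSub_mono {I J : Submodule F Q} (h : I ≤ J) :
    ∀ n, Submodule.powSub F I n ≤ Submodule.powSub F J n
  | 0 => h
  | n + 1 => mulSub_mono (powSub_mono h n) h

theorem idem_eq_zero {I : Submodule F Q} (hnil : ∃ n, Submodule.powSub F I n = ⊥)
    {z : Q} (hz : z ∈ I) (hidem : z * z = z) : z = 0 := by
  obtain ⟨n, hn⟩ := hnil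
  have key : ∀ m, z ∈ Submodule.powSub F I m := by
    intro m
    induction m with
    | zero => exact hz
    | succ m ih =>
      have h := mem_mulSub (F := F) ih hz
      rwa [hidem] at h
  have h := key n
  rw [hn] at h
  simpa using h

end AuxMSD

/-- Let `Q = A/J^H(A) = B₁ ⊕ ⋯ ⊕ B_q` (direct sum of `H`-invariant ideals, each `Bᵢ`
unital with identity `eᵢ`), and let `B` be the maximal semisimple subalgebra of `Q` with
`Q = B ⊕ J(Q)` from the weak Wedderburn–Malcev lemma.  Then `1_B = 1_Q = Σᵢ eᵢ`, the
algebras `B̃ᵢ := 1_{Bᵢ}B` satisfy `B = B̃₁ ⊕ ⋯ ⊕ B̃_q` (direct sum of ideals of `B`),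
each `B̃ᵢ` is a maximal semisimple subalgebra of `Bᵢ`, and `1_{B̃ᵢ} = 1_{Bᵢ} ∈ B`. -/
theorem maximal_semisimple_decomposition (F : Type*) [Field F] [IsAlgClosed F]
    (Q : Type*) [NonUnitalRing Q] [Module F Q] [SMulCommClass F Q Q] [IsScalarTower F Q Q]
    [FiniteDimensional F Q]
    (H : Type*) [Ring H] [Algebra F H] (ρ : H →ₐ[F] Module.End F Q)
    (hgen : IsGenAction ρ)
    -- the decomposition `Q = B₁ ⊕ ⋯ ⊕ B_q` into `H`-invariant ideals
    (q : ℕ) (Bi : Fin q → Submodule F Q)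
    (hBideal : ∀ i, ∀ a : Q, ∀ x ∈ Bi i, a * x ∈ Bi i ∧ x * a ∈ Bi i)
    (hBinv : ∀ i, ∀ h : H, ∀ x ∈ Bi i, ρ h x ∈ Bi i)
    (hBint : DirectSum.IsInternal Bi)
    -- each `Bᵢ` is unital with identity `e i`
    (e : Fin q → Q) (he : ∀ i, e i ∈ Bi i)
    (heunit : ∀ i, ∀ x ∈ Bi i, e i * x = x ∧ x * e i = x)
    -- `JQ` is the Jacobson radical of `Q` (its maximal nilpotent two-sided ideal)
    (JQ : Submodule F Q)
    (hJQideal : ∀ a : Q, ∀ x ∈ JQ, a * x ∈ JQ ∧ x * a ∈ JQ)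
    (hJQnil : ∃ n : ℕ, Submodule.powSub F JQ n = ⊥)
    (hJQmax : ∀ I : Submodule F Q, (∀ a : Q, ∀ x ∈ I, a * x ∈ I ∧ x * a ∈ I) →
      (∃ n : ℕ, Submodule.powSub F I n = ⊥) → I ≤ JQ)
    -- `B` is a maximal semisimple subalgebra with `Q = B ⊕ J(Q)`
    (B : NonUnitalSubalgebra F Q)
    (hBss : IsSemisimplePiece F B.toSubmodule)
    (hBmax : ∀ B' : NonUnitalSubalgebra F Q, B ≤ B' →
      IsSemisimplePiece F B'.toSubmodule → B' = B)
    (hBcompl : IsCompl B.toSubmodule JQ) :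
    -- `B̃ᵢ := 1_{Bᵢ}B`
    let Bt : Fin q → Submodule F Q :=
      fun i => Submodule.map (LinearMap.mulLeft F (e i)) B.toSubmodule
    -- `1_B = 1_{A/J^H(A)}`, i.e. `Σᵢ eᵢ` is the identity of `Q` and belongs to `B`
    ((∑ i, e i) ∈ B ∧ (∀ x : Q, (∑ i, e i) * x = x ∧ x * (∑ i, e i) = x)) ∧
    -- `B = B̃₁ ⊕ ⋯ ⊕ B̃_q` (direct sum of ideals of `B`)
    (iSupIndep Bt ∧ (⨆ i, Bt i) = B.toSubmodule ∧
      ∀ i, ∀ b ∈ B, ∀ x ∈ Bt i, b * x ∈ Bt i ∧ x * b ∈ Bt i) ∧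
    -- each `B̃ᵢ` is a maximal semisimple subalgebra of `Bᵢ`
    (∀ i, Bt i ≤ Bi i ∧ (∀ x ∈ Bt i, ∀ y ∈ Bt i, x * y ∈ Bt i) ∧
      IsSemisimplePiece F (Bt i) ∧
      ∀ C : Submodule F Q, (∀ x ∈ C, ∀ y ∈ C, x * y ∈ C) → C ≤ Bi i → Bt i ≤ C →
        IsSemisimplePiece F C → C = Bt i) ∧
    -- `1_{B̃ᵢ} = 1_{Bᵢ} ∈ B`
    (∀ i, e i ∈ Bt i ∧ e i ∈ B ∧ ∀ x ∈ Bt i, e i * x = x ∧ x * e i = x) := by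
  classical
  intro Bt
  have hmulB : ∀ x ∈ B.toSubmodule, ∀ y ∈ B.toSubmodule, x * y ∈ B.toSubmodule := by
    intro x hx y hy
    show x * y ∈ B
    exact mul_mem hx hy
  -- pairwise disjointness of the `Bi`
  have hpd : Pairwise (Function.onFun Disjoint Bi) := hBint.submodule_iSupIndep.pairwiseDisjoint
  -- `e i * x` and `x * e i` are killed on `Bi j` for `j ≠ i`
  have hzero : ∀ i j, i ≠ j → ∀ x ∈ Bi j, e i * x = 0 ∧ x * e i = 0 := by
    intro i j hij x hx
    constructor
    · exact Submodule.disjoint_def.mp (hpd hij) _ (hBideal i x (e i) (he i)).2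
        (hBideal j (e i) x hx).1
    · exact Submodule.disjoint_def.mp (hpd hij) _ (hBideal i x (e i) (he i)).1
        (hBideal j (e i) x hx).2
  have htop : ∀ x : Q, x ∈ ⨆ j, Bi j := by
    intro x
    rw [hBint.submodule_iSup_eq_top]
    trivial
  -- each `e i` is central
  have hcomm : ∀ i (x : Q), e i * x = x * e i := by
    intro i x
    refine Submodule.iSup_induction Bi (motive := fun y => e i * y = y * e i) (htop x) ?_ (by simp) ?_
    · intro j y hy
      by_cases h : j = i
      · subst h
        rw [(heunit j y hy).1, (heunit j y hy).2]
      · rw [(hzero i j (fun hh => h hh.symm) y hy).1, (hzero i j (fun hh => h hh.symm) y hy).2]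
    · intro y z hy hz
      rw [mul_add, add_mul, hy, hz]
  -- `∑ i, e i` is a two-sided identity
  have hone : ∀ x : Q, (∑ i, e i) * x = x := by
    intro x
    refine Submodule.iSup_induction Bi (motive := fun y => (∑ i, e i) * y = y) (htop x) ?_
      (by simp) ?_
    · intro j y hy
      rw [Finset.sum_mul]
      rw [Finset.sum_eq_single j (fun i _ hij => (hzero i j hij y hy).1) (by simp)]
      exact (heunit j y hy).1
    · intro y z hy hz
      rw [mul_add, hy, hz]
  have hone' : ∀ x : Q, x * (∑ i, e i) = x := by
    intro x
    rw [Finset.mul_sum]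
    have : ∀ i ∈ Finset.univ, x * e i = e i * x := fun i _ => (hcomm i x).symm
    rw [Finset.sum_congr rfl this, ← Finset.sum_mul, hone]
  -- each `e i` belongs to `B`
  have heB : ∀ i, e i ∈ B := by
    intro i
    have hmem : e i ∈ B.toSubmodule ⊔ JQ := by
      rw [hBcompl.codisjoint.eq_top]
      trivial
    obtain ⟨b, hb, j, hj, hbj⟩ := Submodule.mem_sup.mp hmem
    set u := e i with hu
    have hu2 : u * u = u := (heunit i u (he i)).1
    have hbeq : b = u - j := by rw [← hbj]; abel
    have hjeq : j = u - b := by rw [← hbj]; abel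
    have hbB : b ∈ B := hb
    -- `b` is idempotent
    have hIdB : b * b - b ∈ B.toSubmodule := sub_mem (hmulB b hb b hb) hb
    have hIdJ : b * b - b ∈ JQ := by
      have hrw : b * b - b = j - u * j - j * u + j * j := by
        rw [hbeq, sub_mul, mul_sub, mul_sub, hu2]
        abel
      rw [hrw]
      exact add_mem (sub_mem (sub_mem hj (hJQideal u j hj).1) (hJQideal u j hj).2)
        (hJQideal j j hj).1
    have hbb : b * b = b :=
      sub_eq_zero.mp (Submodule.disjoint_def.mp hBcompl.disjoint _ hIdB hIdJ)
    have hbu : b * u = u * b := (hcomm i b).symm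
    have h1 : u * (u * b) = u * b := by rw [← mul_assoc, hu2]
    have h2 : (u * b) * u = u * b := by rw [mul_assoc, hbu, h1]
    have h3 : (u * b) * (u * b) = u * b := by
      rw [mul_assoc, ← mul_assoc b u b, hbu, mul_assoc u b b, hbb, h1]
    have h4 : b * (u * b) = u * b := by rw [← mul_assoc, hbu, mul_assoc, hbb]
    have h5 : (u * b) * b = u * b := by rw [mul_assoc, hbb]
    have hz2mem : u - u * b ∈ JQ := by
      have hrw : u - u * b = u * j := by rw [hjeq, mul_sub, hu2]
      rw [hrw]
      exact (hJQideal u j hj).1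
    have hz2idem : (u - u * b) * (u - u * b) = u - u * b := by
      rw [sub_mul, mul_sub, mul_sub, hu2, h1, h2, h3]
      abel
    have hz2 : u = u * b := sub_eq_zero.mp (AuxMSD.idem_eq_zero hJQnil hz2mem hz2idem)
    have hz1mem : b - u * b ∈ JQ := by
      have hrw : b - u * b = u * j - j := by
        rw [hjeq, mul_sub, hu2]
        abel
      rw [hrw]
      exact sub_mem (hJQideal u j hj).1 hj
    have hz1idem : (b - u * b) * (b - u * b) = b - u * b := by
      rw [sub_mul, mul_sub, mul_sub, hbb, h4, h5, h3]
      abel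
    have hz1 : b = u * b := sub_eq_zero.mp (AuxMSD.idem_eq_zero hJQnil hz1mem hz1idem)
    have hub : u = b := hz2.trans hz1.symm
    rw [hub]
    exact hbB
  -- membership in `Bt i`
  have hBtmem : ∀ i (x : Q), x ∈ Bt i ↔ ∃ b ∈ B.toSubmodule, e i * b = x := by
    intro i x
    constructor
    · intro hx
      obtain ⟨b, hb, hbe⟩ := Submodule.mem_map.mp hx
      exact ⟨b, hb, hbe⟩
    · rintro ⟨b, hb, rfl⟩
      exact Submodule.mem_map.mpr ⟨b, hb, rfl⟩
  have hBtBsub : ∀ i, Bt i ≤ B.toSubmodule := by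
    intro i x hx
    obtain ⟨b, hb, rfl⟩ := (hBtmem i x).mp hx
    exact hmulB _ (heB i) _ hb
  have hBtBi : ∀ i, Bt i ≤ Bi i := by
    intro i x hx
    obtain ⟨b, hb, rfl⟩ := (hBtmem i x).mp hx
    exact (hBideal i b (e i) (he i)).2
  have heBt : ∀ i, e i ∈ Bt i :=
    fun i => (hBtmem i (e i)).mpr ⟨e i, heB i, (heunit i (e i) (he i)).1⟩
  have hBtfix : ∀ i, ∀ x ∈ Bt i, e i * x = x := by
    intro i x hx
    exact (heunit i x (hBtBi i hx)).1
  have hBtfix' : ∀ i, ∀ x ∈ Bt i, x * e i = x := by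
    intro i x hx
    rw [← hcomm]
    exact hBtfix i x hx
  -- products between `B` and any `C` between `Bt i` and `Bi i`
  refine ⟨⟨sum_mem (fun i _ => heB i), fun x => ⟨hone x, hone' x⟩⟩, ?_, ?_, ?_⟩
  · -- direct sum of ideals
    refine ⟨hBint.submodule_iSupIndep.mono hBtBi, ?_, ?_⟩
    · refine le_antisymm (iSup_le hBtBsub) ?_
      intro x hx
      have hxsum : x = ∑ i, e i * x := by rw [← Finset.sum_mul, hone]
      rw [hxsum]
      exact sum_mem fun i _ =>
        Submodule.mem_iSup_of_mem i ((hBtmem i _).mpr ⟨x, hx, rfl⟩)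
    · intro i b hb x hx
      obtain ⟨b', hb', rfl⟩ := (hBtmem i x).mp hx
      constructor
      · have hrw : b * (e i * b') = e i * (b * b') := by
          rw [← mul_assoc, ← hcomm, mul_assoc]
        rw [hrw]
        exact (hBtmem i _).mpr ⟨b * b', hmulB _ hb _ hb', rfl⟩
      · have hrw : (e i * b') * b = e i * (b' * b) := by rw [mul_assoc]
        rw [hrw]
        exact (hBtmem i _).mpr ⟨b' * b, hmulB _ hb' _ hb, rfl⟩
  · -- maximal semisimple subalgebra of `Bi i`
    intro i
    refine ⟨hBtBi i, ?_, ?_, ?_⟩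
    · -- multiplicatively closed
      intro x hx y hy
      obtain ⟨b, hb, rfl⟩ := (hBtmem i x).mp hx
      have hrw : (e i * b) * y = e i * (b * y) := by rw [mul_assoc]
      rw [hrw]
      exact (hBtmem i _).mpr ⟨b * y, hmulB _ hb _ (hBtBsub i hy), rfl⟩
    · -- semisimple
      intro W hW hWid hWnil
      refine hBss W (hW.trans (hBtBsub i)) ?_ hWnil
      intro c hc w hw
      have hew : e i * w = w := hBtfix i w (hW hw)
      have hwe : w * e i = w := hBtfix' i w (hW hw)
      have hecBt : e i * c ∈ Bt i := (hBtmem i _).mpr ⟨c, hc, rfl⟩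
      constructor
      · have hrw : c * w = (e i * c) * w := by
          conv_lhs => rw [← hew]
          rw [← mul_assoc, ← hcomm]
        rw [hrw]
        exact (hWid (e i * c) hecBt w hw).1
      · have hrw : w * c = w * (e i * c) := by
          conv_lhs => rw [← hwe]
          rw [mul_assoc]
        rw [hrw]
        exact (hWid (e i * c) hecBt w hw).2
    · -- maximality
      intro C hCmul hCBi hBtC hCss
      have hBC : ∀ b ∈ B.toSubmodule, ∀ c ∈ C, b * c ∈ C ∧ c * b ∈ C := by
        intro b hb c hc
        have hcfix : e i * c = c := (heunit i c (hCBi hc)).1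
        have hcfix' : c * e i = c := (heunit i c (hCBi hc)).2
        have hebC : e i * b ∈ C := hBtC ((hBtmem i _).mpr ⟨b, hb, rfl⟩)
        constructor
        · have hrw : b * c = (e i * b) * c := by
            conv_lhs => rw [← hcfix]
            rw [← mul_assoc, ← hcomm]
          rw [hrw]
          exact hCmul _ hebC _ hc
        · have hrw : c * b = c * (e i * b) := by
            conv_lhs => rw [← hcfix']
            rw [mul_assoc]
          rw [hrw]
          exact hCmul _ hc _ hebC
      have hmulD : ∀ x y : Q, x ∈ B.toSubmodule ⊔ C → y ∈ B.toSubmodule ⊔ C →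
          x * y ∈ B.toSubmodule ⊔ C := by
        intro x y hx hy
        obtain ⟨bx, hbx, cx, hcx, rfl⟩ := Submodule.mem_sup.mp hx
        obtain ⟨by', hby, cy, hcy, rfl⟩ := Submodule.mem_sup.mp hy
        refine Submodule.mem_sup.mpr ⟨bx * by', hmulB _ hbx _ hby,
          bx * cy + (cx * by' + cx * cy), ?_, by noncomm_ring⟩
        exact add_mem (hBC bx hbx cy hcy).1
          (add_mem (hBC by' hby cx hcx).2 (hCmul _ hcx _ hcy))
      set D : NonUnitalSubalgebra F Q :=
        (B.toSubmodule ⊔ C).toNonUnitalSubalgebra hmulD with hD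
      have hDsub : D.toSubmodule = B.toSubmodule ⊔ C :=
        Submodule.toNonUnitalSubalgebra_toSubmodule _ _
      have hBD : B ≤ D := by
        intro x hx
        exact Submodule.mem_toNonUnitalSubalgebra.mpr (Submodule.mem_sup_left hx)
      have hDss : IsSemisimplePiece F D.toSubmodule := by
        rw [hDsub]
        intro W hW hWid hWnil
        have heiD : e i ∈ B.toSubmodule ⊔ C := Submodule.mem_sup_right (hBtC (heBt i))
        set W1 := W ⊓ LinearMap.ker (LinearMap.mulLeft F (e i) - LinearMap.id) with hW1
        have hW1mem : ∀ x : Q, x ∈ W1 ↔ x ∈ W ∧ e i * x = x := by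
          intro x
          rw [hW1, Submodule.mem_inf, LinearMap.mem_ker, LinearMap.sub_apply,
            LinearMap.mulLeft_apply, LinearMap.id_apply, sub_eq_zero]
        have hW1C : W1 ≤ C := by
          intro x hx
          obtain ⟨hxW, hxfix⟩ := (hW1mem x).mp hx
          obtain ⟨b, hb, c, hc, hbc⟩ := Submodule.mem_sup.mp (hW hxW)
          have hxeq : x = e i * b + c := by
            calc x = e i * x := hxfix.symm
              _ = e i * b + e i * c := by rw [← hbc, mul_add]
              _ = e i * b + c := by rw [(heunit i c (hCBi hc)).1]
          rw [hxeq]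
          exact add_mem (hBtC ((hBtmem i _).mpr ⟨b, hb, rfl⟩)) hc
        have hW1id : ∀ c ∈ C, ∀ w ∈ W1, c * w ∈ W1 ∧ w * c ∈ W1 := by
          intro c hc w hw
          obtain ⟨hwW, _⟩ := (hW1mem w).mp hw
          have hcD : c ∈ B.toSubmodule ⊔ C := Submodule.mem_sup_right hc
          constructor
          · refine (hW1mem _).mpr ⟨(hWid c hcD w hwW).1, ?_⟩
            exact (heunit i _ (hBideal i w c (hCBi hc)).2).1
          · refine (hW1mem _).mpr ⟨(hWid c hcD w hwW).2, ?_⟩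
            exact (heunit i _ (hBideal i w c (hCBi hc)).1).1
        have hW1nil : ∃ n, Submodule.powSub F W1 n = ⊥ := by
          obtain ⟨n, hn⟩ := hWnil
          exact ⟨n, le_bot_iff.mp (hn ▸ AuxMSD.powSub_mono inf_le_left n)⟩
        have hW1bot : W1 = ⊥ := hCss W1 hW1C hW1id hW1nil
        have hkill : ∀ w ∈ W, e i * w = 0 := by
          intro w hw
          have h1 : e i * w ∈ W := (hWid (e i) heiD w hw).1
          have h2 : e i * (e i * w) = e i * w := by
            rw [← mul_assoc, (heunit i (e i) (he i)).1]
          have h3 : e i * w ∈ W1 := (hW1mem _).mpr ⟨h1, h2⟩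
          rw [hW1bot] at h3
          simpa using h3
        have hWB : W ≤ B.toSubmodule := by
          intro w hw
          obtain ⟨b, hb, c, hc, hbc⟩ := Submodule.mem_sup.mp (hW hw)
          have h0 : e i * b + c = 0 := by
            have h1 : e i * b + e i * c = 0 := by rw [← mul_add, hbc, hkill w hw]
            rwa [(heunit i c (hCBi hc)).1] at h1
          have hc' : c = -(e i * b) := eq_neg_of_add_eq_zero_right h0
          rw [← hbc, hc']
          exact add_mem hb (neg_mem (hmulB _ (heB i) _ hb))
        exact hBss W hWB (fun c hc w hw => hWid c (Submodule.mem_sup_left hc) w hw) hWnil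
      have hDB : D = B := hBmax D hBD hDss
      have hCB : C ≤ B.toSubmodule := by
        have h1 : D.toSubmodule = B.toSubmodule := by rw [hDB]
        calc C ≤ B.toSubmodule ⊔ C := le_sup_right
          _ = D.toSubmodule := hDsub.symm
          _ = B.toSubmodule := h1
      refine le_antisymm ?_ hBtC
      intro c hc
      exact (hBtmem i c).mpr ⟨c, hCB hc, (heunit i c (hCBi hc)).1⟩
  · -- identities
    intro i
    exact ⟨heBt i, heB i, fun x hx => ⟨hBtfix i x hx, hBtfix' i x hx⟩⟩
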